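/- Let A be a Minkowski Dedekind domain (finite residue fields, and only finitely many maximal ideals of bounded norm) and n a positive integer. Then there exists a unique minimal n-congruing ideal of A: namely, the kernel of the ring map pr_n : A → ∏_𝔭 Â_𝔭/H_n^𝔭 (product over maximal ideals 𝔭, where H_n^𝔭 is the ideal of Â_𝔭 generated by x^n − 1 for units x) is contained in every n-congruing ideal of A, and is itself n-congruing. -/

import Mathlib

open AdicCompletion Polynomial UniqueFactorizationMonoid IsDedekindDomain

namespace Stmt10Aux

variable {A : Type} [CommRing A]

/-- Elements of the adic completion are determined by their `evalₐ`s. -/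
lemma evalₐ_inj {P : Ideal A} {x y : AdicCompletion P A}
    (h : ∀ k, evalₐ P k x = evalₐ P k y) : x = y := by
  ext k
  have hk := h k
  have heq : (P ^ k • ⊤ : Ideal A) = P ^ k := by ext z; simp
  exact (Ideal.quotientEquivAlgOfEq A heq).injective hk

/-- If `a ∉ P` with `P` maximal, then the image of `a` in the adic completion is a unit. -/
lemma isUnit_algebraMap {P : Ideal A} (hP : P.IsMaximal) {a : A} (ha : a ∉ P) :
    IsUnit (algebraMap A (AdicCompletion P A) a) := by
  have hsup : Ideal.span {a} ⊔ P = ⊤ := by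
    obtain ⟨z, i, hi, hzi⟩ := hP.exists_inv ha
    rw [Ideal.eq_top_iff_one, ← hzi]
    exact Submodule.add_mem_sup (Ideal.mem_span_singleton'.mpr ⟨z, rfl⟩) hi
  have hco : ∀ k : ℕ, ∃ b : A, 1 - a * b ∈ P ^ k := by
    intro k
    have h2 : Ideal.span {a} ⊔ P ^ k = ⊤ := Ideal.sup_pow_eq_top hsup
    have h1 : (1 : A) ∈ Ideal.span {a} ⊔ P ^ k := h2 ▸ Submodule.mem_top
    obtain ⟨y, hy, z, hz, hyz⟩ := Submodule.mem_sup.mp h1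
    obtain ⟨b, rfl⟩ := Ideal.mem_span_singleton'.mp hy
    exact ⟨b, by rw [mul_comm a b, show 1 - b * a = z by rw [← hyz]; ring]; exact hz⟩
  choose b hb using hco
  have hcauchy : AdicCompletion.IsAdicCauchy P A b := by
    intro m k hmk
    rw [SModEq.sub_mem]
    have heq : (P ^ m • ⊤ : Ideal A) = P ^ m := by ext z; simp
    rw [heq]
    have h1 : 1 - a * b m ∈ P ^ m := hb m
    have h2 : 1 - a * b k ∈ P ^ m := Ideal.pow_le_pow_right hmk (hb k)
    have key : b m - b k = b m * ((1 - a * b k) - (1 - a * b m)) +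
        (1 - a * b m) * (b m - b k) := by ring
    rw [key]
    exact add_mem (Ideal.mul_mem_left _ _ (sub_mem h2 h1)) (Ideal.mul_mem_right _ _ h1)
  set u : AdicCompletion P A := AdicCompletion.mk P A ⟨b, hcauchy⟩ with hu
  refine IsUnit.of_mul_eq_one u (evalₐ_inj fun k => ?_)
  rw [map_mul, map_one, hu, AdicCompletion.evalₐ_mk P k (⟨b, hcauchy⟩ : AdicCauchySequence P A), AlgHom.commutes,
    Ideal.Quotient.algebraMap_eq, ← map_mul]
  show Ideal.Quotient.mk (P ^ k) (a * b k) = Ideal.Quotient.mk (P ^ k) 1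
  rw [Ideal.Quotient.eq]
  have := neg_mem (hb k)
  simpa using this
  
/-- The local congruence ideal pulls back into `P ^ e` whenever `P ^ e` is `n`-congruing. -/
lemma comap_le_pow {P : Ideal A} (hP : P.IsMaximal) {n : ℕ} (e : ℕ)
    (hcong : ∀ a : A, ∃ N : ℕ, a ^ N * (a ^ n - 1) ∈ P ^ e) :
    Ideal.comap (algebraMap A (AdicCompletion P A))
      (Ideal.span {y : AdicCompletion P A |
        ∃ x : (AdicCompletion P A)ˣ, y = (x : AdicCompletion P A) ^ n - 1}) ≤ P ^ e := by
  intro a ha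
  rw [Ideal.mem_comap] at ha
  have hker : Ideal.span {y : AdicCompletion P A |
      ∃ x : (AdicCompletion P A)ˣ, y = (x : AdicCompletion P A) ^ n - 1} ≤
      RingHom.ker ((evalₐ P e : AdicCompletion P A →ₐ[A] A ⧸ P ^ e) :
        AdicCompletion P A →+* A ⧸ P ^ e) := by
    rw [Ideal.span_le]
    rintro y ⟨x, rfl⟩
    obtain ⟨v, hv⟩ := (Units.isUnit x).map
      ((evalₐ P e : AdicCompletion P A →ₐ[A] A ⧸ P ^ e) : AdicCompletion P A →+* A ⧸ P ^ e)
    obtain ⟨c, hc⟩ := Ideal.Quotient.mk_surjective (v : A ⧸ P ^ e)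
    obtain ⟨N, hN⟩ := hcong c
    have h0 : (Ideal.Quotient.mk (P ^ e)) (c ^ N * (c ^ n - 1)) = 0 :=
      Ideal.Quotient.eq_zero_iff_mem.mpr hN
    rw [map_mul, map_sub, map_pow, map_pow, map_one, hc] at h0
    have h1 : ((v : A ⧸ P ^ e) ^ n - 1) = 0 := by
      have h2 := Units.inv_mul_cancel_left (v ^ N) ((v : A ⧸ P ^ e) ^ n - 1)
      rw [Units.val_pow_eq_pow_val, h0, mul_zero] at h2
      exact h2.symm
    have : (evalₐ P e) ((x : AdicCompletion P A) ^ n - 1) = 0 := by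
      rw [map_sub, map_pow, map_one]
      rw [show (evalₐ P e) (x : AdicCompletion P A) = (v : A ⧸ P ^ e) from hv.symm]
      exact h1
    exact this
  have h3 := hker ha
  rw [RingHom.mem_ker] at h3
  have h3' : (evalₐ P e) (algebraMap A (AdicCompletion P A) a) = 0 := h3
  rw [AlgHom.commutes, Ideal.Quotient.algebraMap_eq] at h3'
  exact Ideal.Quotient.eq_zero_iff_mem.mp h3'


section Dedekind
variable [IsDomain A] [IsDedekindDomain A]

lemma exists_pow_le_comap {P : Ideal A} (hP : P.IsMaximal) {n : ℕ} (hn : 0 < n) :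
    ∃ k : ℕ, P ^ k ≤ Ideal.comap (algebraMap A (AdicCompletion P A))
      (Ideal.span {y : AdicCompletion P A |
        ∃ x : (AdicCompletion P A)ˣ, y = (x : AdicCompletion P A) ^ n - 1}) := by
  set K := Ideal.comap (algebraMap A (AdicCompletion P A))
      (Ideal.span {y : AdicCompletion P A |
        ∃ x : (AdicCompletion P A)ˣ, y = (x : AdicCompletion P A) ^ n - 1}) with hK
  by_cases hbot : P = ⊥
  · exact ⟨1, by rw [hbot, pow_one]; exact bot_le⟩
  -- every (1+t)^n - 1 with t ∈ P lies in K
  have hgen : ∀ t ∈ P, (1 + t) ^ n - 1 ∈ K := by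
    intro t ht
    have h1t : (1 + t) ∉ P := by
      intro h
      have : (1 : A) ∈ P := by simpa using P.sub_mem h ht
      exact hP.ne_top ((Ideal.eq_top_iff_one _).mpr this)
    obtain ⟨x, hx⟩ := isUnit_algebraMap hP h1t
    rw [hK, Ideal.mem_comap]
    have : algebraMap A (AdicCompletion P A) ((1 + t) ^ n - 1)
        = (x : AdicCompletion P A) ^ n - 1 := by rw [map_sub, map_pow, map_one, hx]
    rw [this]
    exact Ideal.subset_span ⟨x, rfl⟩
  set K₀ : Ideal A := Ideal.span {c : A | ∃ t ∈ P, c = (1 + t) ^ n - 1} with hK₀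
  have hK₀K : K₀ ≤ K := Ideal.span_le.mpr (by rintro c ⟨t, ht, rfl⟩; exact hgen t ht)
  -- K₀ is nonzero
  have hK₀ne : K₀ ≠ ⊥ := by
    obtain ⟨t₀, ht₀P, ht₀⟩ := Submodule.exists_mem_ne_zero_of_ne_bot hbot
    have ht₀u : ¬ IsUnit t₀ := fun hu => hP.ne_top (P.eq_top_of_isUnit_mem ht₀P hu)
    have hinj : Function.Injective (fun j : ℕ => t₀ ^ (j + 1)) := by
      intro i j hij
      have := pow_injective_of_not_isUnit ht₀u ht₀ hij
      omega
    set q : A[X] := (X + 1) ^ n - 1 with hq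
    have hqne : q ≠ 0 := by
      intro h
      have : q.coeff n = 0 := by rw [h]; simp
      rw [hq, Polynomial.coeff_sub, Polynomial.coeff_X_add_one_pow, Nat.choose_self,
        Polynomial.coeff_one, if_neg hn.ne'] at this
      simpa using this
    have hroots := Polynomial.finite_setOf_isRoot hqne
    have hrange := Set.infinite_range_of_injective hinj
    have hns : ¬ (Set.range (fun j : ℕ => t₀ ^ (j + 1)) ⊆ {x | q.IsRoot x}) :=
      fun hsub => hrange (hroots.subset hsub)
    obtain ⟨y, ⟨j, rfl⟩, hy⟩ := Set.not_subset.mp hns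
    have hyP : t₀ ^ (j + 1) ∈ P := Ideal.pow_mem_of_mem P ht₀P _ (Nat.succ_pos j)
    have hcmem : (1 + t₀ ^ (j + 1)) ^ n - 1 ∈ K₀ :=
      Ideal.subset_span ⟨t₀ ^ (j + 1), hyP, rfl⟩
    intro h
    rw [h, Ideal.mem_bot] at hcmem
    apply hy
    show q.IsRoot _
    rw [hq]
    simp only [Polynomial.IsRoot, Polynomial.eval_sub, Polynomial.eval_pow,
      Polynomial.eval_add, Polynomial.eval_X, Polynomial.eval_one]
    rw [add_comm] at hcmem
    exact hcmem
  -- P is contained in the radical of K₀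
  have hrad : P ≤ K₀.radical := by
    rw [Ideal.radical_eq_sInf]
    refine le_sInf ?_
    rintro Q ⟨hQ1, hQ2⟩
    by_cases hQbot : Q = ⊥
    · exact absurd (le_bot_iff.mp (hQbot ▸ hQ1)) hK₀ne
    have hQmax : Q.IsMaximal := hQ2.isMaximal hQbot
    by_contra hPQ
    have hne : P ≠ Q := fun h => hPQ (le_of_eq h)
    have hsup : P ⊔ Q = ⊤ := hP.coprime_of_ne hQmax hne
    have hm1 : (-1 : A) ∈ P ⊔ Q := hsup ▸ Submodule.mem_top
    obtain ⟨t, htP, z, hzQ, htz⟩ := Submodule.mem_sup.mp hm1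
    have h1t : (1 : A) + t ∈ Q := by
      have : (1 : A) + t = -z := by rw [show t = -1 - z by rw [← htz]; ring]; ring
      rw [this]; exact neg_mem hzQ
    have hgenQ : (1 + t) ^ n - 1 ∈ Q := hQ1 (Ideal.subset_span ⟨t, htP, rfl⟩)
    have hone : (1 : A) ∈ Q := by
      have hp : (1 + t) ^ n ∈ Q := Ideal.pow_mem_of_mem Q h1t n hn
      simpa using Q.sub_mem hp hgenQ
    exact hQ2.ne_top ((Ideal.eq_top_iff_one _).mpr hone)
  obtain ⟨k, hk⟩ := Ideal.exists_pow_le_of_le_radical_of_fg_radical hrad (IsNoetherian.noetherian K₀.radical)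
  exact ⟨k, hk.trans hK₀K⟩


omit [IsDomain A] [IsDedekindDomain A] in
lemma finite_setOf_mem' [IsDomain A] [IsDedekindDomain A] {a : A} (ha : a ≠ 0) :
    {𝔭 : MaximalSpectrum A | a ∈ 𝔭.asIdeal}.Finite := by
  have hspan : (Ideal.span {a} : Ideal A) ≠ 0 := by
    simpa using ha
  have hfin := Ideal.finite_factors hspan
  rw [← Set.finite_coe_iff] at hfin ⊢
  refine Finite.of_injective (fun 𝔭 =>
    (⟨⟨𝔭.1.asIdeal, 𝔭.1.isMaximal.isPrime, fun h => ha (by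
        have h2 : a ∈ (𝔭 : MaximalSpectrum A).asIdeal := 𝔭.2
        rw [h] at h2; exact (Submodule.mem_bot A).mp h2)⟩,
      Ideal.dvd_iff_le.mpr ((Ideal.span_singleton_le_iff_mem _).mpr 𝔭.2)⟩ :
      {v : HeightOneSpectrum A | v.asIdeal ∣ Ideal.span {a}})) ?_
  intro 𝔭 𝔮 h
  have : 𝔭.1.asIdeal = 𝔮.1.asIdeal := congrArg (fun v => v.1.asIdeal) h
  exact Subtype.ext (MaximalSpectrum.ext this)


lemma le_multiset_prod' [DecidableEq (Ideal A)] (J : Ideal A) :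
    ∀ S : Multiset (Ideal A), (∀ Q ∈ S, Prime Q) →
      (∀ Q ∈ S, J ≤ Q ^ S.count Q) → J ≤ S.prod := by
  intro S
  induction S using Multiset.strongInductionOn with
  | ih S ih =>
    intro hprime hle
    rcases Multiset.empty_or_exists_mem S with rfl | ⟨Q, hQ⟩
    · simp
    · set c := S.count Q with hc
      set S' := S.filter (fun R => ¬ R = Q) with hS'
      have hdecomp : S = Multiset.replicate c Q + S' := by
        conv_lhs => rw [← Multiset.filter_add_not (fun R => R = Q) S]
        rw [Multiset.filter_eq', hS']
      have hprodeq : S.prod = Q ^ c * S'.prod := by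
        conv_lhs => rw [hdecomp]
        rw [Multiset.prod_add, Multiset.prod_replicate]
      have hQprime := hprime Q hQ
      have hQP : Q.IsPrime := (Ideal.prime_iff_isPrime (hQprime.ne_zero)).mp hQprime
      have hQmax : Q.IsMaximal := hQP.isMaximal hQprime.ne_zero
      have hQS' : Q ∉ S' := by simp [hS']
      have hS'le : S' ≤ S := Multiset.filter_le _ S
      have hS'lt : S' < S := lt_of_le_of_ne hS'le (fun h => hQS' (h ▸ hQ))
      have hJS' : J ≤ S'.prod := by
        refine ih S' hS'lt (fun R hR => hprime R (Multiset.mem_of_le hS'le hR)) ?_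
        intro R hR
        have hRQ : ¬ R = Q := (Multiset.mem_filter.mp hR).2
        have : S'.count R = S.count R := by
          rw [hS', Multiset.count_filter, if_pos hRQ]
        rw [this]
        exact hle R (Multiset.mem_of_le hS'le hR)
      have hsup : Q ⊔ S'.prod = ⊤ := by
        by_contra h
        have hlt : Q ≤ Q ⊔ S'.prod := le_sup_left
        have : Q ⊔ S'.prod = Q := by
          rcases eq_or_lt_of_le hlt with h' | h'
          · exact h'.symm
          · exact absurd (hQmax.1.2 _ h') h
        have hle2 : S'.prod ≤ Q := by rw [← this]; exact le_sup_right
        obtain ⟨R, hR, hRQ⟩ := (hQP.multiset_prod_le).mp hle2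
        have hRprime := hprime R (Multiset.mem_of_le hS'le hR)
        have hRmax : R.IsMaximal :=
          ((Ideal.prime_iff_isPrime hRprime.ne_zero).mp hRprime).isMaximal hRprime.ne_zero
        have : R = Q := hRmax.eq_of_le hQmax.ne_top hRQ
        exact (Multiset.mem_filter.mp hR).2 this
      have hsup' : Q ^ c ⊔ S'.prod = ⊤ := by
        rw [sup_comm] at hsup ⊢
        exact Ideal.sup_pow_eq_top hsup
      rw [hprodeq, Ideal.mul_eq_inf_of_coprime hsup', le_inf_iff]
      have hcnt : J ≤ Q ^ c := hle Q hQ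
      exact ⟨hcnt, hJS'⟩
end Dedekind

end Stmt10Aux

/-- Let `A` be a Minkowski Dedekind domain and `n` a positive integer. Then the kernel of
`pr_n : A → ∏_𝔭 Â_𝔭/H_n^𝔭` — namely the ideal `⨅_𝔭 (H_n^𝔭 comap the completion map)` —
is the unique minimal `n`-congruing ideal of `A`: it is itself `n`-congruing and is
contained in every `n`-congruing ideal. -/
theorem stmt_10 {A : Type} [CommRing A] [IsDomain A] [IsDedekindDomain A]
    (hfin : ∀ 𝔭 : MaximalSpectrum A, Finite (A ⧸ 𝔭.asIdeal))
    (hmink : ∀ N : ℕ, {𝔭 : MaximalSpectrum A | Nat.card (A ⧸ 𝔭.asIdeal) < N}.Finite)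
    (n : ℕ) (hn : 0 < n)
    (J : Ideal A)
    (hJ : J = ⨅ 𝔭 : MaximalSpectrum A,
        Ideal.comap (algebraMap A (AdicCompletion 𝔭.asIdeal A))
          (Ideal.span {y : AdicCompletion 𝔭.asIdeal A |
            ∃ x : (AdicCompletion 𝔭.asIdeal A)ˣ,
              y = (x : AdicCompletion 𝔭.asIdeal A) ^ n - 1})) :
    (∀ a : A, ∃ N : ℕ, a ^ N * (a ^ n - 1) ∈ J) ∧
      ∀ I : Ideal A, (∀ a : A, ∃ N : ℕ, a ^ N * (a ^ n - 1) ∈ I) → J ≤ I := by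
  classical
  have key : ∀ (𝔭 : MaximalSpectrum A) (e : ℕ),
      (∀ a : A, ∃ N : ℕ, a ^ N * (a ^ n - 1) ∈ 𝔭.asIdeal ^ e) → J ≤ 𝔭.asIdeal ^ e := by
    intro 𝔭 e he
    refine le_trans ?_ (Stmt10Aux.comap_le_pow 𝔭.isMaximal e he)
    rw [hJ]; exact iInf_le _ 𝔭
  constructor
  · intro a
    by_cases ha : a = 0
    · refine ⟨1, ?_⟩
      rw [ha]
      simpa using J.zero_mem
    · choose k hk using fun 𝔭 : MaximalSpectrum A =>
        Stmt10Aux.exists_pow_le_comap (A := A) 𝔭.isMaximal hn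
      set T := (Stmt10Aux.finite_setOf_mem' ha).toFinset with hT
      refine ⟨T.sup k, ?_⟩
      rw [hJ, Submodule.mem_iInf]
      intro 𝔭
      by_cases hmem : a ∈ 𝔭.asIdeal
      · have h𝔭T : 𝔭 ∈ T := by rw [hT, Set.Finite.mem_toFinset]; exact hmem
        have h1 : a ^ (T.sup k) ∈ 𝔭.asIdeal ^ (k 𝔭) :=
          Ideal.pow_le_pow_right (Finset.le_sup h𝔭T) (Ideal.pow_mem_pow hmem _)
        exact Ideal.mul_mem_right _ _ (hk 𝔭 h1)
      · apply Ideal.mul_mem_left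
        obtain ⟨x, hx⟩ := Stmt10Aux.isUnit_algebraMap 𝔭.isMaximal hmem
        rw [Ideal.mem_comap]
        have heq : algebraMap A (AdicCompletion 𝔭.asIdeal A) (a ^ n - 1)
            = (x : AdicCompletion 𝔭.asIdeal A) ^ n - 1 := by
          rw [map_sub, map_pow, map_one, hx]
        rw [heq]
        exact Ideal.subset_span ⟨x, rfl⟩
  · intro I hI
    by_cases htop : I = ⊤
    · rw [htop]; exact le_top
    by_cases hbot : I = ⊥
    · subst hbot
      have hfield : IsField A := by
        refine ⟨exists_pair_ne A, mul_comm, ?_⟩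
        intro a ha0
        obtain ⟨N, hN⟩ := hI a
        rw [Ideal.mem_bot] at hN
        rcases mul_eq_zero.mp hN with h | h
        · rcases (pow_eq_zero_iff' (M₀ := A)).mp h with ⟨h1, _⟩
          exact absurd h1 ha0
        · refine ⟨a ^ (n - 1), ?_⟩
          calc a * a ^ (n - 1) = a ^ (n - 1 + 1) := (pow_succ' a (n - 1)).symm
            _ = a ^ n := by rw [Nat.sub_add_cancel hn]
            _ = 1 := sub_eq_zero.mp h
      letI : Field A := hfield.toField
      have hmax : (⊥ : Ideal A).IsMaximal := Ideal.bot_isMaximal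
      have hkey := key ⟨⊥, hmax⟩ 1 (by simpa using hI)
      simpa using hkey
    · have hprod : (normalizedFactors I).prod = I := prod_normalizedFactors_eq_self hbot
      refine le_of_le_of_eq (Stmt10Aux.le_multiset_prod' J (normalizedFactors I)
        (fun Q hQ => prime_of_normalized_factor Q hQ) ?_) hprod
      intro Q hQ
      have hQprime := prime_of_normalized_factor Q hQ
      have hQmax : Q.IsMaximal :=
        ((Ideal.prime_iff_isPrime hQprime.ne_zero).mp hQprime).isMaximal hQprime.ne_zero
      have hdvd : Q ^ ((normalizedFactors I).count Q) ∣ I := by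
        have h5 := Multiset.prod_dvd_prod_of_le
          (Multiset.le_count_iff_replicate_le.mp (le_refl ((normalizedFactors I).count Q)))
        rwa [Multiset.prod_replicate, hprod] at h5
      have hIle : I ≤ Q ^ ((normalizedFactors I).count Q) := Ideal.le_of_dvd hdvd
      exact key ⟨Q, hQmax⟩ _ (fun a => (hI a).imp (fun N h => hIle h))
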